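/- (Degree bounds for iterative Hensel lifting.) Let F be a field, d ≥ 1 an integer, and let f ∈ F[X,Y] have total degree at most d. Let g_0, h_0, a_0, b_0 ∈ F[Y] ⊆ F[X,Y] each have total degree at most d. Define recursively, for every i ≥ 0: m_i := f − g_i·h_i; g_{i+1} := g_i + b_i·m_i; h_{i+1} := h_i + a_i·m_i; q_{i+1} := a_i·g_{i+1} + b_i·h_{i+1} − 1; a_{i+1} := a_i − a_i·q_{i+1}; b_{i+1} := b_i − b_i·q_{i+1}. Then for every i ≥ 0, the total degrees of g_i, h_i, a_i and b_i are each at most d·5^i. -/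

import Mathlib

/-!
STATEMENT 8 (Degree bounds for iterative Hensel lifting): Let F be a field, d ≥ 1 an integer,
and let f ∈ F[X,Y] have total degree at most d. Let g_0, h_0, a_0, b_0 ∈ F[Y] ⊆ F[X,Y] each
have total degree at most d. Define recursively, for every i ≥ 0: m_i := f − g_i·h_i;
g_{i+1} := g_i + b_i·m_i; h_{i+1} := h_i + a_i·m_i; q_{i+1} := a_i·g_{i+1} + b_i·h_{i+1} − 1;
a_{i+1} := a_i − a_i·q_{i+1}; b_{i+1} := b_i − b_i·q_{i+1}. Then for every i ≥ 0, the total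
degrees of g_i, h_i, a_i and b_i are each at most d·5^i.

Bivariate polynomials in F[X,Y] are represented as `Polynomial (Polynomial F)` with outer
variable Y and inner variable X; the coefficient of X^i·Y^j in Q is `(Q.coeff j).coeff i`.
"Total degree at most n" for such a polynomial means every monomial X^i·Y^j appearing with a
nonzero coefficient has i + j ≤ n (the zero polynomial satisfies this vacuously).
An element of F[Y] ⊆ F[X,Y] is `p.map Polynomial.C` for p : F[Y] (as `Polynomial F`).
-/

/-- Every monomial `X^i·Y^j` of `Q` with a nonzero coefficient satisfies `i + j ≤ n`. -/
def TotalDegLE {F : Type*} [CommRing F] (Q : Polynomial (Polynomial F)) (n : ℕ) : Prop :=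
  ∀ i j : ℕ, (Q.coeff j).coeff i ≠ 0 → i + j ≤ n

section Lemmas

variable {F : Type*} [CommRing F]

lemma tle_mono {Q : Polynomial (Polynomial F)} {m n : ℕ} (h : TotalDegLE Q m) (hmn : m ≤ n) :
    TotalDegLE Q n := fun i j hij => le_trans (h i j hij) hmn

lemma tle_add {P Q : Polynomial (Polynomial F)} {n : ℕ} (hP : TotalDegLE P n)
    (hQ : TotalDegLE Q n) : TotalDegLE (P + Q) n := by
  intro i j hij
  rw [Polynomial.coeff_add, Polynomial.coeff_add] at hij
  by_cases h0 : (P.coeff j).coeff i = 0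
  · exact hQ i j (fun hc => hij (by rw [h0, hc, add_zero]))
  · exact hP i j h0

lemma tle_neg {Q : Polynomial (Polynomial F)} {n : ℕ} (hQ : TotalDegLE Q n) :
    TotalDegLE (-Q) n := by
  intro i j hij
  apply hQ i j
  simpa using hij

lemma tle_sub {P Q : Polynomial (Polynomial F)} {n : ℕ} (hP : TotalDegLE P n)
    (hQ : TotalDegLE Q n) : TotalDegLE (P - Q) n := by
  rw [sub_eq_add_neg]; exact tle_add hP (tle_neg hQ)

lemma tle_mul {P Q : Polynomial (Polynomial F)} {m n : ℕ} (hP : TotalDegLE P m)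
    (hQ : TotalDegLE Q n) : TotalDegLE (P * Q) (m + n) := by
  intro i j hij
  rw [Polynomial.coeff_mul, Polynomial.finset_sum_coeff] at hij
  obtain ⟨⟨j1, j2⟩, hmem, h1⟩ := Finset.exists_ne_zero_of_sum_ne_zero hij
  rw [Polynomial.coeff_mul] at h1
  obtain ⟨⟨i1, i2⟩, hmem2, h2⟩ := Finset.exists_ne_zero_of_sum_ne_zero h1
  have hp := hP i1 j1 (left_ne_zero_of_mul h2)
  have hq := hQ i2 j2 (right_ne_zero_of_mul h2)
  rw [Finset.HasAntidiagonal.mem_antidiagonal] at hmem hmem2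
  omega

lemma tle_one {n : ℕ} : TotalDegLE (1 : Polynomial (Polynomial F)) n := by
  intro i j hij
  rcases eq_or_ne j 0 with rfl | hj
  · rw [Polynomial.coeff_one, if_pos rfl] at hij
    rcases eq_or_ne i 0 with rfl | hi
    · omega
    · rw [Polynomial.coeff_one, if_neg (by omega)] at hij; exact absurd rfl hij
  · rw [Polynomial.coeff_one, if_neg (by omega)] at hij
    simp at hij

lemma tle_mapC {p : Polynomial F} {n : ℕ} (hp : p.natDegree ≤ n) :
    TotalDegLE (p.map Polynomial.C) n := by
  intro i j hij
  rw [Polynomial.coeff_map, Polynomial.coeff_C] at hij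
  rcases eq_or_ne i 0 with rfl | hi
  · have : p.coeff j ≠ 0 := by simpa using hij
    have := Polynomial.le_natDegree_of_ne_zero this
    omega
  · rw [if_neg hi] at hij; exact absurd rfl hij

end Lemmas

theorem statement8 (F : Type*) [Field F] (d : ℕ) (hd : 1 ≤ d)
    (f : Polynomial (Polynomial F)) (hf : TotalDegLE f d)
    (g h a b : ℕ → Polynomial (Polynomial F))
    (pg ph pa pb : Polynomial F)
    (hg0 : g 0 = pg.map Polynomial.C) (hh0 : h 0 = ph.map Polynomial.C)
    (ha0 : a 0 = pa.map Polynomial.C) (hb0 : b 0 = pb.map Polynomial.C)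
    (hdg0 : pg.natDegree ≤ d) (hdh0 : ph.natDegree ≤ d)
    (hda0 : pa.natDegree ≤ d) (hdb0 : pb.natDegree ≤ d)
    (hgrec : ∀ i, g (i + 1) = g i + b i * (f - g i * h i))
    (hhrec : ∀ i, h (i + 1) = h i + a i * (f - g i * h i))
    (harec : ∀ i, a (i + 1) = a i - a i * (a i * g (i + 1) + b i * h (i + 1) - 1))
    (hbrec : ∀ i, b (i + 1) = b i - b i * (a i * g (i + 1) + b i * h (i + 1) - 1)) :
    ∀ i : ℕ, TotalDegLE (g i) (d * 5 ^ i) ∧ TotalDegLE (h i) (d * 5 ^ i) ∧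
      TotalDegLE (a i) (d * 5 ^ i) ∧ TotalDegLE (b i) (d * 5 ^ i) := by
  intro i
  induction i with
  | zero =>
    simp only [pow_zero, mul_one, hg0, hh0, ha0, hb0]
    exact ⟨tle_mapC hdg0, tle_mapC hdh0, tle_mapC hda0, tle_mapC hdb0⟩
  | succ i ih =>
    obtain ⟨hgi, hhi, hai, hbi⟩ := ih
    set D := d * 5 ^ i with hD
    have hdD : d ≤ D := Nat.le_mul_of_pos_right d (Nat.pow_pos (by norm_num : 0 < 5))
    have hm : TotalDegLE (f - g i * h i) (2 * D) :=
      tle_sub (tle_mono hf (by omega)) (tle_mono (tle_mul hgi hhi) (by omega))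
    have hg' : TotalDegLE (g (i + 1)) (3 * D) := by
      rw [hgrec i]
      exact tle_add (tle_mono hgi (by omega)) (tle_mono (tle_mul hbi hm) (by omega))
    have hh' : TotalDegLE (h (i + 1)) (3 * D) := by
      rw [hhrec i]
      exact tle_add (tle_mono hhi (by omega)) (tle_mono (tle_mul hai hm) (by omega))
    have hq : TotalDegLE (a i * g (i + 1) + b i * h (i + 1) - 1) (4 * D) :=
      tle_sub (tle_add (tle_mono (tle_mul hai hg') (by omega))
        (tle_mono (tle_mul hbi hh') (by omega))) (tle_one : TotalDegLE 1 (4 * D))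
    have h5 : d * 5 ^ (i + 1) = 5 * D := by rw [hD]; ring
    rw [h5]
    refine ⟨tle_mono hg' (by omega), tle_mono hh' (by omega), ?_, ?_⟩
    · rw [harec i]
      exact tle_sub (tle_mono hai (by omega)) (tle_mono (tle_mul hai hq) (by omega))
    · rw [hbrec i]
      exact tle_sub (tle_mono hbi (by omega)) (tle_mono (tle_mul hbi hq) (by omega))
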